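/- arXiv:2106.13051 — 4 statements merged into one kernel-verified Lean document; each statement's English description precedes it below -/
import Mathlib

section
/- Let Γ be a finitely generated torsion-free nilpotent group and σ a unipotent automorphism of Γ, i.e., one for which the induced automorphism of gr Γ ≅ ℤ^h is unipotent. If Γ is nontrivial, then there exists a normal subgroup Γ' ≤ Γ with Γ/Γ' ≅ ℤ such that σ(Γ') = Γ' and σ acts trivially on Γ/Γ'. -/
open Subgroup
open scoped commutatorElement

section Aux
variable {H : Type*} [Group H]

private lemma aux_mem_of_right {B C : Subgroup H} (hC : ⁅B, (⊤ : Subgroup H)⁆ ≤ C)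
    {x y : H} (hx : x ∈ B) : ⁅y, x⁆ ∈ C := by
  have h1 : ⁅x, y⁆ ∈ ⁅B, (⊤ : Subgroup H)⁆ := commutator_mem_commutator hx (mem_top y)
  have h2 := inv_mem h1
  rw [commutatorElement_inv] at h2
  exact hC h2

private lemma aux_pow_mod {A B C : Subgroup H} [C.Normal]
    (hB : ⁅A, (⊤ : Subgroup H)⁆ ≤ B) (hC : ⁅B, (⊤ : Subgroup H)⁆ ≤ C)
    {g : H} (hg : g ∈ A) (h : H) (n : ℕ) :
    (QuotientGroup.mk' C) ⁅g ^ n, h⁆ = ((QuotientGroup.mk' C) ⁅g, h⁆) ^ n := by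
  induction n with
  | zero => simp
  | succ n ih =>
    have hmemB : ⁅g ^ n, h⁆ ∈ B := hB (commutator_mem_commutator (pow_mem hg n) (mem_top h))
    have hcomm : Commute ((QuotientGroup.mk' C) g) ((QuotientGroup.mk' C) ⁅g ^ n, h⁆) := by
      rw [← commutatorElement_eq_one_iff_commute, ← map_commutatorElement,
        QuotientGroup.mk'_apply, QuotientGroup.eq_one_iff]
      exact aux_mem_of_right hC hmemB
    have key : ⁅g ^ (n + 1), h⁆ = g * ⁅g ^ n, h⁆ * g⁻¹ * ⁅g, h⁆ := by
      simp only [commutatorElement_def, pow_succ']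
      group
    rw [key, map_mul, map_mul, map_mul, map_inv, hcomm.eq, mul_inv_cancel_right, ih, pow_succ]

private lemma aux_step {A B C : Subgroup H} [C.Normal]
    (hB : ⁅A, (⊤ : Subgroup H)⁆ = B) (hC : ⁅B, (⊤ : Subgroup H)⁆ = C)
    (hyp : ∀ g ∈ A, ∃ n, 0 < n ∧ g ^ n ∈ B) :
    ∀ x ∈ B, ∃ n, 0 < n ∧ x ^ n ∈ C := by
  have hclB : closure {g | ∃ g₁ ∈ A, ∃ g₂ ∈ (⊤ : Subgroup H), ⁅g₁, g₂⁆ = g} = B := by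
    exact (commutator_def A ⊤).symm.trans hB
  intro x hx
  have hx' : x ∈ closure {g | ∃ g₁ ∈ A, ∃ g₂ ∈ (⊤ : Subgroup H), ⁅g₁, g₂⁆ = g} := by
    rw [hclB]; exact hx
  clear hx
  induction hx' using closure_induction with
  | mem x hxs =>
    obtain ⟨g, hg, h, -, rfl⟩ := hxs
    obtain ⟨n, hn, hgnB⟩ := hyp g hg
    refine ⟨n, hn, ?_⟩
    have h1 : (QuotientGroup.mk' C) (⁅g, h⁆ ^ n) = 1 := by
      rw [map_pow, ← aux_pow_mod hB.le hC.le hg h n, QuotientGroup.mk'_apply,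
        QuotientGroup.eq_one_iff]
      exact hC.le (commutator_mem_commutator hgnB (mem_top h))
    rwa [QuotientGroup.mk'_apply, QuotientGroup.eq_one_iff] at h1
  | one => exact ⟨1, Nat.one_pos, by simpa using one_mem C⟩
  | mul x y hxc hyc ihx ihy =>
    obtain ⟨n, hn, hxn⟩ := ihx
    obtain ⟨m, hm, hym⟩ := ihy
    have hxB : x ∈ B := hclB ▸ hxc
    have hyB : y ∈ B := hclB ▸ hyc
    refine ⟨n * m, Nat.mul_pos hn hm, ?_⟩
    have hcomm : Commute ((QuotientGroup.mk' C) x) ((QuotientGroup.mk' C) y) := by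
      rw [← commutatorElement_eq_one_iff_commute, ← map_commutatorElement,
        QuotientGroup.mk'_apply, QuotientGroup.eq_one_iff]
      exact hC.le (commutator_mem_commutator hxB (mem_top y))
    have h1 : ((QuotientGroup.mk' C) x) ^ n = 1 := by
      rw [← map_pow, QuotientGroup.mk'_apply, QuotientGroup.eq_one_iff]; exact hxn
    have h2 : ((QuotientGroup.mk' C) y) ^ m = 1 := by
      rw [← map_pow, QuotientGroup.mk'_apply, QuotientGroup.eq_one_iff]; exact hym
    have h3 : (QuotientGroup.mk' C) ((x * y) ^ (n * m)) = 1 := by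
      rw [map_pow, map_mul, hcomm.mul_pow, pow_mul, h1, one_pow, pow_mul', h2, one_pow, one_mul]
    rwa [QuotientGroup.mk'_apply, QuotientGroup.eq_one_iff] at h3
  | inv x hxc ihx =>
    obtain ⟨n, hn, hxn⟩ := ihx
    exact ⟨n, hn, by rw [inv_pow]; exact inv_mem hxn⟩

private def Dser (K : Subgroup H) : ℕ → Subgroup H
  | 0 => K
  | n + 1 => ⁅Dser K n, ⊤⁆

private lemma Dser_normal (K : Subgroup H) [hK : K.Normal] : ∀ n, (Dser K n).Normal
  | 0 => hK
  | n + 1 => by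
    haveI := Dser_normal K n
    exact Subgroup.commutator_normal _ _

private lemma Dser_le_lcs (K : Subgroup H) : ∀ n, Dser K n ≤ (⊤ : Subgroup H).lowerCentralSeries n
  | 0 => le_top
  | n + 1 => by
    show ⁅Dser K n, ⊤⁆ ≤ ⁅(⊤ : Subgroup H).lowerCentralSeries n, ⊤⁆
    exact Subgroup.commutator_mono (Dser_le_lcs K n) le_rfl

private lemma Dser_torsion (K : Subgroup H) [K.Normal]
    (hyp : ∀ g ∈ K, ∃ n, 0 < n ∧ g ^ n ∈ Dser K 1) :
    ∀ k, ∀ g ∈ Dser K k, ∃ n, 0 < n ∧ g ^ n ∈ Dser K (k + 1)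
  | 0 => hyp
  | k + 1 => by
    haveI := Dser_normal K (k + 2)
    exact aux_step rfl rfl (Dser_torsion K hyp k)

private lemma Dser_chain (K : Subgroup H) [K.Normal]
    (hyp : ∀ g ∈ K, ∃ n, 0 < n ∧ g ^ n ∈ Dser K 1) :
    ∀ j, ∀ g ∈ K, ∃ n, 0 < n ∧ g ^ n ∈ Dser K j
  | 0 => fun g hg => ⟨1, Nat.one_pos, by simpa [Dser] using hg⟩
  | j + 1 => fun g hg => by
    obtain ⟨n, hn, hgn⟩ := Dser_chain K hyp j g hg
    obtain ⟨m, hm, hgm⟩ := Dser_torsion K hyp j _ hgn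
    exact ⟨n * m, Nat.mul_pos hn hm, by rwa [pow_mul]⟩

private lemma torsion_of_nilpotent (K : Subgroup H) [K.Normal] (hH : Group.IsNilpotent H)
    (hyp : ∀ g ∈ K, ∃ n, 0 < n ∧ g ^ n ∈ ⁅K, (⊤ : Subgroup H)⁆) :
    ∀ g ∈ K, IsOfFinOrder g := by
  obtain ⟨N, hN⟩ := _root_.nilpotent_iff_lowerCentralSeries.mp hH
  intro g hg
  obtain ⟨n, hn, hgn⟩ := Dser_chain K hyp N g hg
  have h1 : g ^ n = 1 := by
    have h2 := Dser_le_lcs K N hgn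
    rw [hN] at h2
    simpa using h2
  exact isOfFinOrder_iff_pow_eq_one.mpr ⟨n, hn, h1⟩

end Aux


section Main
open DirectSum

/-- Let `Γ` be a nontrivial finitely generated torsion-free nilpotent group and `σ` a
unipotent automorphism of `Γ`; unipotence is expressed by the equivalent condition that
the semidirect product `Γ ⋊_σ ℤ` is nilpotent.  Then there exists a normal subgroup
`Γ' ≤ Γ` with `Γ/Γ' ≅ ℤ` (realized as the kernel of a surjection onto `ℤ`) such that
`σ(Γ') = Γ'` and `σ` acts trivially on `Γ/Γ'`. -/
theorem statement6 (G : Type*) [Group G] [Nontrivial G] (hfg : Group.FG G)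
    (htf : ∀ g : G, g ≠ 1 → ¬IsOfFinOrder g) (hnilp : Group.IsNilpotent G) (σ : MulAut G)
    (hunip : Group.IsNilpotent (G ⋊[zpowersHom (MulAut G) σ] Multiplicative ℤ)) :
    ∃ Γ' : Subgroup G,
      (∃ f : G →* Multiplicative ℤ, Function.Surjective f ∧ f.ker = Γ') ∧
      Subgroup.map σ.toMonoidHom Γ' = Γ' ∧
      ∀ x : G, (QuotientGroup.mk (σ x) : G ⧸ Γ') = QuotientGroup.mk x := by
  classical
  haveI := hfg
  set H := G ⋊[zpowersHom (MulAut G) σ] Multiplicative ℤ with hHdef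
  let ι : G →* H := SemidirectProduct.inl
  let K : Subgroup H := ι.range
  haveI hKnorm : K.Normal := by
    have : K = (SemidirectProduct.rightHom : H →* Multiplicative ℤ).ker :=
      SemidirectProduct.range_inl_eq_ker_rightHom
    rw [this]; infer_instance
  let N : Subgroup G := Subgroup.comap ι ⁅K, (⊤ : Subgroup H)⁆
  haveI hCN : (⁅K, (⊤ : Subgroup H)⁆).Normal := Subgroup.commutator_normal K ⊤
  have hcommN : ∀ x y : G, ⁅x, y⁆ ∈ N := by
    intro x y
    show ι ⁅x, y⁆ ∈ ⁅K, (⊤ : Subgroup H)⁆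
    rw [map_commutatorElement]
    exact Subgroup.commutator_mem_commutator ⟨x, rfl⟩ (Subgroup.mem_top _)
  haveI hNnorm : N.Normal := by
    constructor
    intro x hx g
    show ι (g * x * g⁻¹) ∈ ⁅K, (⊤ : Subgroup H)⁆
    rw [map_mul, map_mul, map_inv]
    exact hCN.conj_mem _ hx _
  have hσmem : ∀ x : G, σ x * x⁻¹ ∈ N := by
    intro x
    show ι (σ x * x⁻¹) ∈ ⁅K, (⊤ : Subgroup H)⁆
    rw [Subgroup.commutator_comm]
    have h2 : σ x = (zpowersHom (MulAut G) σ (Multiplicative.ofAdd 1)) x := by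
      simp
    have h1 : ι (σ x) = SemidirectProduct.inr (Multiplicative.ofAdd 1) * ι x *
        SemidirectProduct.inr (Multiplicative.ofAdd 1)⁻¹ := by
      rw [h2]; exact SemidirectProduct.inl_aut _ _
    have h3 : ι (σ x * x⁻¹) =
        ⁅(SemidirectProduct.inr (Multiplicative.ofAdd 1) : H), ι x⁆ := by
      rw [map_mul, map_inv, h1, map_inv, commutatorElement_def]
    rw [h3]
    exact Subgroup.commutator_mem_commutator (Subgroup.mem_top _) ⟨x, rfl⟩
  -- find element of infinite order mod N
  have hex : ∃ g₀ : G, ∀ n, 0 < n → g₀ ^ n ∉ N := by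
    by_contra hcon
    push_neg at hcon
    obtain ⟨g, hg⟩ := exists_ne (1 : G)
    have hfin : IsOfFinOrder (ι g) := by
      refine torsion_of_nilpotent K hunip ?_ (ι g) ⟨g, rfl⟩
      rintro x ⟨y, rfl⟩
      obtain ⟨n, hn, hyn⟩ := hcon y
      exact ⟨n, hn, by rw [← map_pow]; exact hyn⟩
    obtain ⟨n, hn, h1⟩ := isOfFinOrder_iff_pow_eq_one.mp hfin
    rw [← map_pow] at h1
    have h2 : g ^ n = 1 := SemidirectProduct.inl_injective (by rw [h1, map_one])
    exact htf g hg (isOfFinOrder_iff_pow_eq_one.mpr ⟨n, hn, h2⟩)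
  obtain ⟨g₀, hg₀⟩ := hex
  -- the quotient is abelian
  have hAcomm : ∀ a b : G ⧸ N, a * b = b * a := by
    intro a b
    obtain ⟨x, rfl⟩ := QuotientGroup.mk_surjective a
    obtain ⟨y, rfl⟩ := QuotientGroup.mk_surjective b
    rw [← QuotientGroup.mk_mul, ← QuotientGroup.mk_mul, QuotientGroup.eq]
    have h : (x * y)⁻¹ * (y * x) = ⁅y⁻¹, x⁻¹⁆ := by
      simp only [commutatorElement_def]; group
    rw [h]
    exact hcommN _ _
  letI : CommGroup (G ⧸ N) := { (inferInstance : Group (G ⧸ N)) with mul_comm := hAcomm }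
  haveI : Group.FG (G ⧸ N) := Group.fg_of_surjective (QuotientGroup.mk'_surjective N)
  haveI : AddGroup.FG (Additive (G ⧸ N)) := GroupFG.iff_add_fg.mp ‹Group.FG (G ⧸ N)›
  have ha₀ : ∀ m : ℕ, 0 < m → (QuotientGroup.mk g₀ : G ⧸ N) ^ m ≠ 1 := by
    intro m hm hmeq
    have h1 : ((g₀ ^ m : G) : G ⧸ N) = 1 := by
      rw [show ((g₀ ^ m : G) : G ⧸ N) = (QuotientGroup.mk g₀ : G ⧸ N) ^ m from
        (QuotientGroup.mk' N).map_pow g₀ m, hmeq]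
    exact hg₀ m hm ((QuotientGroup.eq_one_iff _).mp h1)
  obtain ⟨n, ιt, fιt, p, hp, e, ⟨eqv⟩⟩ :=
    AddCommGroup.equiv_free_prod_directSum_zmod (Additive (G ⧸ N))
  haveI : ∀ i : ιt, NeZero (p i ^ e i) :=
    fun i => ⟨pow_ne_zero _ (hp i).pos.ne'⟩
  cases n with
  | zero =>
    exfalso
    haveI : Subsingleton (Fin 0 →₀ ℤ) := ⟨fun a b => Finsupp.ext fun i => i.elim0⟩
    haveI : Finite (Fin 0 →₀ ℤ) := Finite.of_subsingleton
    haveI : Finite (⨁ i : ιt, ZMod (p i ^ e i)) := by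
      haveI : Fintype (Π₀ i : ιt, ZMod (p i ^ e i)) := DFinsupp.fintype
      exact Finite.of_fintype (Π₀ i : ιt, ZMod (p i ^ e i))
    haveI : Finite ((Fin 0 →₀ ℤ) × (⨁ i : ιt, ZMod (p i ^ e i))) := by
      infer_instance
    haveI : Finite (Additive (G ⧸ N)) := Finite.of_equiv _ eqv.toEquiv.symm
    haveI : Finite (G ⧸ N) := Finite.of_equiv _ Additive.toMul
    obtain ⟨m, hm, hmeq⟩ :=
      isOfFinOrder_iff_pow_eq_one.mp (isOfFinOrder_of_finite (QuotientGroup.mk g₀ : G ⧸ N))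
    exact ha₀ m hm hmeq
  | succ k =>
    let proj : ((Fin (k + 1) →₀ ℤ) × (⨁ i : ιt, ZMod (p i ^ e i))) →+ ℤ :=
      (Finsupp.applyAddHom (0 : Fin (k + 1))).comp (AddMonoidHom.fst _ _)
    let f' : Additive (G ⧸ N) →+ ℤ := proj.comp eqv.toAddMonoidHom
    have hf'surj : Function.Surjective f' := by
      intro z
      refine ⟨eqv.symm (Finsupp.single 0 z, 0), ?_⟩
      simp [f', proj]
    let f : (G ⧸ N) →* Multiplicative ℤ := AddMonoidHom.toMultiplicativeRight f'
    have hfsurj : Function.Surjective f := by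
      intro z
      obtain ⟨a, ha⟩ := hf'surj (Multiplicative.toAdd z)
      exact ⟨Additive.toMul a, by
        show Multiplicative.ofAdd (f' (Additive.ofMul (Additive.toMul a))) = z
        simp [ha]⟩
    let F : G →* Multiplicative ℤ := f.comp (QuotientGroup.mk' N)
    have hFsurj : Function.Surjective F := hfsurj.comp (QuotientGroup.mk'_surjective N)
    have hFN : ∀ x ∈ N, F x = 1 := by
      intro x hx
      show f ((QuotientGroup.mk' N) x) = 1
      have h1 : ((x : G ⧸ N)) = 1 := (QuotientGroup.eq_one_iff x).mpr hx
      rw [QuotientGroup.mk'_apply, h1, map_one]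
    have hFσ : ∀ x : G, F (σ x) = F x := by
      intro x
      have h1 : σ x = (σ x * x⁻¹) * x := by group
      rw [h1, map_mul, hFN _ (hσmem x), one_mul]
    refine ⟨F.ker, ⟨F, hFsurj, rfl⟩, ?_, ?_⟩
    · ext y
      simp only [Subgroup.mem_map]
      constructor
      · rintro ⟨x, hx, rfl⟩
        show F (σ x) = 1
        rw [hFσ]
        exact hx
      · intro hy
        refine ⟨σ.symm y, ?_, ?_⟩
        · show F (σ.symm y) = 1
          rw [← hFσ (σ.symm y), σ.apply_symm_apply]
          exact hy
        · show σ (σ.symm y) = y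
          exact σ.apply_symm_apply y
    · intro x
      rw [QuotientGroup.eq]
      show F ((σ x)⁻¹ * x) = 1
      rw [map_mul, map_inv, hFσ, inv_mul_cancel]

end Main
end

section
/- Let Γ be a group, Λ ≤ Γ an infinite subgroup, S ⊂ Λ \ {1} a finite set, and 0 < δ < 1. If Γ' ≤ Γ is a finite index subgroup such that fx_{Γ,γ}(Γ') < δ²/|S| for all γ ∈ S, then the proportion of cosets g ∈ Γ/Γ' for which fx_{Λ,γ}(gΓ'g^{-1} ∩ Λ) < δ holds for all γ ∈ S is at least 1 − δ. -/
open MulAction Finset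

/-- The fixed point ratio of `g` acting on the coset space `G ⧸ H`:
`fx_{G,g}(H) = |{xH : gxH = xH}| / [G : H]`. -/
noncomputable def fxRatio {G : Type*} [Group G] (H : Subgroup G) (g : G) : ℝ :=
  (Nat.card {x : G ⧸ H // g • x = x} : ℝ) / H.index

lemma stab_eq {Γ : Type*} [Group Γ] (Λ Γ' : Subgroup Γ) (x : Γ ⧸ Γ') :
    (Subgroup.map (MulAut.conj (Quotient.out x)).toMonoidHom Γ' ⊓ Λ).subgroupOf Λ
      = MulAction.stabilizer ↥Λ x := by
  ext l
  have hx : QuotientGroup.mk (Quotient.out x) = x := QuotientGroup.out_eq' x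
  simp only [Subgroup.mem_subgroupOf, Subgroup.mem_inf, MulAction.mem_stabilizer_iff,
    Subgroup.mem_map, MulEquiv.coe_toMonoidHom, MulAut.conj_apply, SetLike.coe_mem, and_true]
  set g := Quotient.out x with hg
  have key : ((l : Γ) • x = x) ↔ g⁻¹ * l * g ∈ Γ' := by
    rw [← hx]
    show (QuotientGroup.mk ((l : Γ) * g) = QuotientGroup.mk g) ↔ _
    rw [QuotientGroup.eq]
    constructor
    · intro h
      have := Γ'.inv_mem h
      convert this using 1
      group
    · intro h
      have := Γ'.inv_mem h
      convert this using 1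
      group
  show (∃ a ∈ Γ', g * a * g⁻¹ = (l : Γ)) ↔ l • x = x
  rw [show (l • x = x) ↔ ((l : Γ) • x = x) from Iff.rfl, key]
  constructor
  · rintro ⟨a, ha, h⟩
    have : g⁻¹ * l * g = a := by rw [← h]; group
    rwa [this]
  · intro h
    exact ⟨g⁻¹ * l * g, h, by group⟩

lemma fix_card {Γ : Type*} [Group Γ] {Λ Γ' : Subgroup Γ} (x : Γ ⧸ Γ') (γ : ↥Λ) :
    Nat.card {q : ↥Λ ⧸ stabilizer ↥Λ x // γ • q = q}
      = Nat.card {y : Γ ⧸ Γ' // y ∈ orbit ↥Λ x ∧ γ • y = y} := by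
  set e := (orbitEquivQuotientStabilizer ↥Λ x).symm with he
  have equiv : ∀ q : ↥Λ ⧸ stabilizer ↥Λ x,
      γ • ((e q : ↑(orbit ↥Λ x)) : Γ ⧸ Γ') = ((e (γ • q) : ↑(orbit ↥Λ x)) : Γ ⧸ Γ') := by
    intro q
    induction q using QuotientGroup.induction_on with
    | H a =>
      have h1 : ((e (QuotientGroup.mk a) : ↑(orbit ↥Λ x)) : Γ ⧸ Γ') = a • x :=
        MulAction.orbitEquivQuotientStabilizer_symm_apply ↥Λ x a
      have h2 : γ • (QuotientGroup.mk a : ↥Λ ⧸ stabilizer ↥Λ x) = QuotientGroup.mk (γ * a) := rfl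
      have h3 : ((e (QuotientGroup.mk (γ * a)) : ↑(orbit ↥Λ x)) : Γ ⧸ Γ') = (γ * a) • x :=
        MulAction.orbitEquivQuotientStabilizer_symm_apply ↥Λ x (γ * a)
      rw [h1, h2, h3, mul_smul]
  apply Nat.card_congr
  refine Equiv.ofBijective (fun q => ⟨((e q.1 : ↑(orbit ↥Λ x)) : Γ ⧸ Γ'), (e q.1).2, ?_⟩) ⟨?_, ?_⟩
  · rw [equiv q.1, q.2]
  · rintro ⟨q1, h1⟩ ⟨q2, h2⟩ h
    simp only [Subtype.mk.injEq] at h ⊢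
    exact e.injective (Subtype.ext h)
  · rintro ⟨y, hy, hfix⟩
    refine ⟨⟨e.symm ⟨y, hy⟩, ?_⟩, ?_⟩
    · apply e.injective
      apply Subtype.ext
      rw [← equiv]
      simp only [Equiv.apply_symm_apply]
      exact hfix
    · simp only [Subtype.mk.injEq, Equiv.apply_symm_apply]

lemma sum_fx {Γ : Type*} [Group Γ] (Λ Γ' : Subgroup Γ) [Fintype (Γ ⧸ Γ')] (γ : ↥Λ) :
    ∑ x : Γ ⧸ Γ', fxRatio (stabilizer ↥Λ x) γ
      = (Nat.card {y : Γ ⧸ Γ' // γ • y = y} : ℝ) := by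
  classical
  set O : Γ ⧸ Γ' → Finset (Γ ⧸ Γ') := fun x => univ.filter (fun y => y ∈ orbit ↥Λ x) with hO
  set F : Finset (Γ ⧸ Γ') := univ.filter (fun y => γ • y = y) with hF
  have hOcard : ∀ x, ((stabilizer ↥Λ x).index : ℕ) = (O x).card := by
    intro x
    rw [index_stabilizer, ← Nat.card_coe_set_eq, Nat.card_eq_fintype_card,
      Fintype.card_subtype]
  have hOpos : ∀ x, 0 < (O x).card := by
    intro x
    exact card_pos.2 ⟨x, by simp [hO, mem_orbit_self]⟩
  have hnum : ∀ x, (Nat.card {q : ↥Λ ⧸ stabilizer ↥Λ x // γ • q = q}) = (O x ∩ F).card := by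
    intro x
    rw [fix_card, Nat.card_eq_fintype_card, Fintype.card_subtype]
    congr 1
    ext y
    simp [hO, hF, mem_filter, mem_inter, and_assoc]
  have hfx : ∀ x : Γ ⧸ Γ', fxRatio (stabilizer ↥Λ x) γ = ((O x ∩ F).card : ℝ) / (O x).card := by
    intro x
    rw [fxRatio, hnum, hOcard]
  have step1 : ∀ x : Γ ⧸ Γ', ((O x ∩ F).card : ℝ) / (O x).card
      = ∑ y ∈ F, (if y ∈ orbit ↥Λ x then (1:ℝ)/(O x).card else 0) := by
    intro x
    rw [Finset.sum_ite, Finset.sum_const, Finset.sum_const_zero, add_zero]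
    have : F.filter (fun y => y ∈ orbit ↥Λ x) = O x ∩ F := by
      ext y; simp [hO, hF, mem_filter, mem_inter, and_comm]
    rw [this, nsmul_eq_mul]
    ring
  have step2 : ∀ y ∈ F, ∀ x : Γ ⧸ Γ',
      (if y ∈ orbit ↥Λ x then (1:ℝ)/(O x).card else 0)
        = (if x ∈ orbit ↥Λ y then (1:ℝ)/(O y).card else 0) := by
    intro y _ x
    by_cases h : y ∈ orbit ↥Λ x
    · have h' : x ∈ orbit ↥Λ y := mem_orbit_symm.1 h
      have horb : orbit ↥Λ x = orbit ↥Λ y := orbit_eq_iff.2 h'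
      rw [if_pos h, if_pos h']
      congr 2
      simp [hO, horb]
    · have h' : x ∉ orbit ↥Λ y := fun hc => h (mem_orbit_symm.1 hc)
      rw [if_neg h, if_neg h']
  calc ∑ x : Γ ⧸ Γ', fxRatio (stabilizer ↥Λ x) γ
      = ∑ x : Γ ⧸ Γ', ∑ y ∈ F, (if y ∈ orbit ↥Λ x then (1:ℝ)/(O x).card else 0) := by
        exact Finset.sum_congr rfl fun x _ => (hfx x).trans (step1 x)
    _ = ∑ y ∈ F, ∑ x : Γ ⧸ Γ', (if y ∈ orbit ↥Λ x then (1:ℝ)/(O x).card else 0) :=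
        Finset.sum_comm
    _ = ∑ y ∈ F, ∑ x : Γ ⧸ Γ', (if x ∈ orbit ↥Λ y then (1:ℝ)/(O y).card else 0) := by
        exact Finset.sum_congr rfl fun y hy => Finset.sum_congr rfl fun x _ => step2 y hy x
    _ = ∑ y ∈ F, (1:ℝ) := by
        refine Finset.sum_congr rfl fun y _ => ?_
        rw [Finset.sum_ite, Finset.sum_const, Finset.sum_const_zero, add_zero]
        have : univ.filter (fun x => x ∈ orbit ↥Λ y) = O y := rfl
        rw [this, nsmul_eq_mul]
        rw [mul_one_div, div_self (Nat.cast_ne_zero.2 (hOpos y).ne' : (#(O y) : ℝ) ≠ 0)]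
    _ = F.card := by simp
    _ = (Nat.card {y : Γ ⧸ Γ' // γ • y = y} : ℝ) := by
        rw [Nat.card_eq_fintype_card, Fintype.card_subtype]

/-- Let `Λ ≤ Γ` be an infinite subgroup, `S ⊆ Λ \ {1}` finite and `0 < δ < 1`.  If `Γ' ≤ Γ`
has finite index and `fx_{Γ,γ}(Γ') < δ²/|S|` for all `γ ∈ S`, then the proportion of cosets
`g ∈ Γ/Γ'` for which `fx_{Λ,γ}(gΓ'g⁻¹ ∩ Λ) < δ` holds for every `γ ∈ S` is at least
`1 − δ`. -/
theorem statement9 {Γ : Type*} [Group Γ] (Λ : Subgroup Γ) (hΛ : Infinite ↥Λ)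
    (S : Finset ↥Λ) (hS : (1 : ↥Λ) ∉ S) (δ : ℝ) (hδ0 : 0 < δ) (hδ1 : δ < 1)
    (Γ' : Subgroup Γ) (hfi : Γ'.FiniteIndex)
    (hfx : ∀ γ ∈ S, fxRatio Γ' (γ : Γ) < δ ^ 2 / S.card) :
    1 - δ ≤
      (Nat.card {x : Γ ⧸ Γ' // ∀ γ ∈ S,
          fxRatio
            ((Subgroup.map (MulAut.conj (Quotient.out x)).toMonoidHom Γ' ⊓ Λ).subgroupOf Λ)
            γ < δ} : ℝ) / Γ'.index := by
  classical
  have hfin : Finite (Γ ⧸ Γ') := Subgroup.finite_quotient_of_finiteIndex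
  let _ : Fintype (Γ ⧸ Γ') := Fintype.ofFinite _
  have hnn : Γ'.index = Fintype.card (Γ ⧸ Γ') := by
    rw [Subgroup.index, Nat.card_eq_fintype_card]
  have hn0 : 0 < (Γ'.index : ℝ) := by
    exact_mod_cast Nat.pos_of_ne_zero hfi.index_ne_zero
  have hrw : ∀ (x : Γ ⧸ Γ') (γ : ↥Λ),
      fxRatio ((Subgroup.map (MulAut.conj (Quotient.out x)).toMonoidHom Γ' ⊓ Λ).subgroupOf Λ) γ
        = fxRatio (stabilizer ↥Λ x) γ := fun x γ => by rw [stab_eq]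
  set good : Finset (Γ ⧸ Γ') :=
    univ.filter (fun x => ∀ γ ∈ S, fxRatio (stabilizer ↥Λ x) γ < δ) with hgood
  have hcard : (Nat.card {x : Γ ⧸ Γ' // ∀ γ ∈ S,
      fxRatio ((Subgroup.map (MulAut.conj (Quotient.out x)).toMonoidHom Γ' ⊓ Λ).subgroupOf Λ)
        γ < δ}) = good.card := by
    rw [Nat.card_eq_fintype_card, Fintype.card_subtype]
    congr 1
    ext x
    simp only [mem_filter, mem_univ, true_and, hgood]
    constructor
    · intro h γ hγ; rw [← hrw]; exact h γ hγ
    · intro h γ hγ; rw [hrw]; exact h γ hγ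
  have hfxnn : ∀ (H : Subgroup ↥Λ) (γ : ↥Λ), 0 ≤ fxRatio H γ := by
    intro H γ; unfold fxRatio; positivity
  -- Markov bound for each γ
  set B : ↥Λ → Finset (Γ ⧸ Γ') :=
    fun γ => univ.filter (fun x => δ ≤ fxRatio (stabilizer ↥Λ x) γ) with hB
  have hkey : ∀ γ ∈ S, ((B γ).card : ℝ) < δ * Γ'.index / S.card := by
    intro γ hγ
    have hScard : 0 < (S.card : ℝ) := by
      exact_mod_cast card_pos.2 ⟨γ, hγ⟩
    have hfixcount : (Nat.card {y : Γ ⧸ Γ' // γ • y = y} : ℝ)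
        = fxRatio Γ' (γ : Γ) * Γ'.index := by
      have : (Nat.card {y : Γ ⧸ Γ' // γ • y = y} : ℝ)
          = (Nat.card {y : Γ ⧸ Γ' // (γ : Γ) • y = y} : ℝ) := rfl
      rw [this, fxRatio, div_mul_cancel₀ _ hn0.ne']
    have h1 : δ * (B γ).card ≤ ∑ x ∈ B γ, fxRatio (stabilizer ↥Λ x) γ := by
      calc δ * (B γ).card = ∑ _x ∈ B γ, δ := by
            rw [Finset.sum_const, nsmul_eq_mul, mul_comm]
        _ ≤ ∑ x ∈ B γ, fxRatio (stabilizer ↥Λ x) γ :=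
            Finset.sum_le_sum fun x hx => (mem_filter.1 hx).2
    have h2 : ∑ x ∈ B γ, fxRatio (stabilizer ↥Λ x) γ
        ≤ ∑ x : Γ ⧸ Γ', fxRatio (stabilizer ↥Λ x) γ :=
      Finset.sum_le_sum_of_subset_of_nonneg (subset_univ _) fun x _ _ => hfxnn _ _
    have h3 : ∑ x : Γ ⧸ Γ', fxRatio (stabilizer ↥Λ x) γ < δ ^ 2 / S.card * Γ'.index := by
      rw [sum_fx Λ Γ' γ, hfixcount]
      exact mul_lt_mul_of_pos_right (hfx γ hγ) hn0
    have h4 : δ * (B γ).card < δ ^ 2 / S.card * Γ'.index := lt_of_le_of_lt (h1.trans h2) h3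
    have := (mul_lt_mul_iff_right₀ hδ0).1 (by
      calc δ * (B γ).card < δ ^ 2 / S.card * Γ'.index := h4
        _ = δ * (δ * Γ'.index / S.card) := by ring)
    exact this
  -- union bound
  set bad : Finset (Γ ⧸ Γ') :=
    univ.filter (fun x => ¬ ∀ γ ∈ S, fxRatio (stabilizer ↥Λ x) γ < δ) with hbad
  have hsub : bad ⊆ S.biUnion B := by
    intro x hx
    rw [hbad, mem_filter] at hx
    push_neg at hx
    obtain ⟨γ, hγ, hge⟩ := hx.2
    exact mem_biUnion.2 ⟨γ, hγ, mem_filter.2 ⟨mem_univ x, hge⟩⟩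
  have hbadcard : (bad.card : ℝ) ≤ δ * Γ'.index := by
    rcases S.eq_empty_or_nonempty with hSe | hSne
    · have : bad = ∅ := by
        rw [hbad, hSe]
        simp
      rw [this]
      simp only [card_empty, Nat.cast_zero]
      positivity
    · have hScard : 0 < (S.card : ℝ) := by exact_mod_cast card_pos.2 hSne
      calc (bad.card : ℝ) ≤ ((S.biUnion B).card : ℝ) := by
            exact_mod_cast Finset.card_le_card hsub
        _ ≤ ∑ γ ∈ S, ((B γ).card : ℝ) := by
            exact_mod_cast Finset.card_biUnion_le
        _ ≤ ∑ _γ ∈ S, δ * Γ'.index / S.card :=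
            Finset.sum_le_sum fun γ hγ => (hkey γ hγ).le
        _ = δ * Γ'.index := by
            rw [Finset.sum_const, nsmul_eq_mul]
            field_simp
  have hsplit : good.card + bad.card = Fintype.card (Γ ⧸ Γ') := by
    rw [hgood, hbad]
    rw [Finset.card_filter_add_card_filter_not]
    exact Finset.card_univ
  rw [hcard]
  rw [le_div_iff₀ hn0]
  have : (good.card : ℝ) = (Γ'.index : ℝ) - bad.card := by
    have := hsplit
    rw [hnn]
    push_cast [← this]
    ring
  rw [this]
  nlinarith [hbadcard]
end

section
/- Let Γ be a group generated by elements γ_1, …, γ_m, each of infinite order, with [γ_i, γ_{i+1}] = 1 for 1 ≤ i ≤ m−1 (a chain-commuting generating set). Let G be the graph whose vertices are the subgroups gH_ig^{-1} (g ∈ Γ, H_i = ⟨γ_i⟩), with an edge between two distinct vertices whenever the subgroup they generate is abelian. Then G is connected, and Γ acts on G by conjugation with finite quotient (on m vertex orbits), with all vertex and edge stabilizers containing an infinite cyclic normal subgroup. -/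
private lemma conjHom_mul {Γ : Type*} [Group Γ] (a b : Γ) (S : Subgroup Γ) :
    Subgroup.map (MulAut.conj (a * b)).toMonoidHom S =
      Subgroup.map (MulAut.conj a).toMonoidHom
        (Subgroup.map (MulAut.conj b).toMonoidHom S) := by
  have h : (MulAut.conj (a * b)).toMonoidHom =
      ((MulAut.conj a).toMonoidHom).comp (MulAut.conj b).toMonoidHom := by
    ext x
    simp only [MonoidHom.coe_comp, Function.comp_apply, MulEquiv.coe_toMonoidHom,
      MulAut.conj_apply]
    group
  rw [h, ← Subgroup.map_map]

private lemma conjHom_one {Γ : Type*} [Group Γ] (S : Subgroup Γ) :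
    Subgroup.map (MulAut.conj (1 : Γ)).toMonoidHom S = S := by
  have h : (MulAut.conj (1 : Γ)).toMonoidHom = MonoidHom.id Γ := by
    ext x
    simp only [MulEquiv.coe_toMonoidHom, MulAut.conj_apply, MonoidHom.id_apply]
    group
  rw [h, Subgroup.map_id]

private lemma sup_zpowers_comm {Γ : Type*} [Group Γ] {a b : Γ} (h : Commute a b) :
    IsMulCommutative ↥(Subgroup.zpowers a ⊔ Subgroup.zpowers b) := by
  have hs : Subgroup.zpowers a ⊔ Subgroup.zpowers b = Subgroup.closure {a, b} := by
    rw [Subgroup.zpowers_eq_closure, Subgroup.zpowers_eq_closure, ← Subgroup.closure_union]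
    rw [Set.singleton_union]
  rw [hs]
  have hcomm : ∀ x ∈ ({a, b} : Set Γ), ∀ y ∈ ({a, b} : Set Γ), x * y = y * x := by
    rintro x (rfl | rfl) y (rfl | rfl) <;> first | rfl | exact h | exact h.symm
  letI := Subgroup.closureCommGroupOfComm hcomm
  exact ⟨⟨fun x y => mul_comm x y⟩⟩

/-- Let `Γ` be generated by `γ₁, …, γₘ`, all of infinite order, with `[γᵢ, γᵢ₊₁] = 1`
(a chain-commuting generating set).  Let `V` be the set of subgroups `g⟨γᵢ⟩g⁻¹` and `G` the
graph on `V` where two distinct vertices are adjacent iff the subgroup they generate is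
abelian.  Then `G` is connected; the conjugation action of `Γ` preserves `V` with (at most)
`m` vertex orbits, namely the orbits of the `⟨γᵢ⟩`; every vertex is an infinite cyclic
subgroup (hence vertex stabilizers — the normalizers — contain an infinite cyclic normal
subgroup); and for every edge `{H, K}` the subgroup `H` is contained in the stabilizer of
the edge (the intersection of the two normalizers), in which it is an infinite cyclic
normal subgroup. -/
theorem statement13 {Γ : Type*} [Group Γ] (m : ℕ) (hm : 1 ≤ m) (γ : Fin m → Γ)
    (hord : ∀ i, ¬IsOfFinOrder (γ i))
    (hcomm : ∀ i : Fin m, ∀ h : (i : ℕ) + 1 < m, Commute (γ i) (γ ⟨(i : ℕ) + 1, h⟩))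
    (hgen : Subgroup.closure (Set.range γ) = ⊤) :
    let V : Set (Subgroup Γ) := {H | ∃ (g : Γ) (i : Fin m),
      H = Subgroup.map (MulAut.conj g).toMonoidHom (Subgroup.zpowers (γ i))}
    let G : SimpleGraph V :=
      { Adj := fun H K => H ≠ K ∧ IsMulCommutative ↥(H.1 ⊔ K.1)
        symm := ⟨fun H K h => ⟨h.1.symm, by rw [sup_comm]; exact h.2⟩⟩
        loopless := ⟨fun H h => h.1 rfl⟩ }
    G.Connected ∧
      (∀ (g : Γ) (H : Subgroup Γ), H ∈ V →
        Subgroup.map (MulAut.conj g).toMonoidHom H ∈ V) ∧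
      (∀ H ∈ V, ∃ i : Fin m, ∃ g : Γ,
        H = Subgroup.map (MulAut.conj g).toMonoidHom (Subgroup.zpowers (γ i))) ∧
      (∀ H ∈ V, ∃ x : Γ, ¬IsOfFinOrder x ∧ H = Subgroup.zpowers x) ∧
      (∀ H K : V, G.Adj H K → H.1 ≤ Subgroup.normalizer (H.1 : Set Γ) ⊓ Subgroup.normalizer (K.1 : Set Γ)) := by
  intro V G
  -- the conjugation action preserves V
  have hV2 : ∀ (g : Γ) (H : Subgroup Γ), H ∈ V →
      Subgroup.map (MulAut.conj g).toMonoidHom H ∈ V := by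
    rintro g H ⟨a, i, rfl⟩
    exact ⟨g * a, i, by rw [conjHom_mul]⟩
  -- vertices
  let vert : Γ → Fin m → V := fun g i =>
    ⟨Subgroup.map (MulAut.conj g).toMonoidHom (Subgroup.zpowers (γ i)), ⟨g, i, rfl⟩⟩
  -- the graph endomorphism given by conjugation
  let cmap : Γ → (V → V) := fun g A => ⟨Subgroup.map (MulAut.conj g).toMonoidHom A.1,
    hV2 g A.1 A.2⟩
  have hcmap_vert : ∀ g a i, cmap g (vert a i) = vert (g * a) i := by
    intro g a i
    exact Subtype.ext (conjHom_mul g a (Subgroup.zpowers (γ i))).symm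
  have hinj : ∀ g : Γ, Function.Injective
      (Subgroup.map (MulAut.conj g).toMonoidHom : Subgroup Γ → Subgroup Γ) :=
    fun g => Subgroup.map_injective (MulAut.conj g).injective
  let hom : ∀ g : Γ, G →g G := fun g =>
    ⟨cmap g, by
      rintro A B ⟨hne, hc⟩
      refine ⟨fun h => hne (Subtype.ext (hinj g (congrArg Subtype.val h))), ?_⟩
      show IsMulCommutative ↥(Subgroup.map _ A.1 ⊔ Subgroup.map _ B.1)
      rw [← Subgroup.map_sup]
      haveI : IsMulCommutative ↥(A.1 ⊔ B.1) := hc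
      exact Subgroup.map_isMulCommutative (A.1 ⊔ B.1) (MulAut.conj g).toMonoidHom⟩
  have homapp : ∀ (g : Γ) (A : V), (hom g) A = cmap g A := fun _ _ => rfl
  have reach_of_comm : ∀ A B : V, IsMulCommutative ↥(A.1 ⊔ B.1) → G.Reachable A B := by
    intro A B h
    by_cases heq : A = B
    · exact heq ▸ SimpleGraph.Reachable.refl A
    · exact (SimpleGraph.Adj.reachable ⟨heq, h⟩)
  set i₀ : Fin m := ⟨0, hm⟩ with hi₀
  -- chain of reachability at the identity
  have chain1 : ∀ (n : ℕ) (h : n < m), G.Reachable (vert 1 i₀) (vert 1 ⟨n, h⟩) := by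
    intro n
    induction n with
    | zero => intro h; exact SimpleGraph.Reachable.refl _
    | succ k ih =>
      intro h
      have hk : k < m := Nat.lt_of_succ_lt h
      refine (ih hk).trans (reach_of_comm _ _ ?_)
      show IsMulCommutative ↥(Subgroup.map _ (Subgroup.zpowers (γ ⟨k, hk⟩)) ⊔
        Subgroup.map _ (Subgroup.zpowers (γ ⟨k + 1, h⟩)))
      rw [conjHom_one, conjHom_one]
      exact sup_zpowers_comm (hcomm ⟨k, hk⟩ h)
  have chain1' : ∀ i j : Fin m, G.Reachable (vert 1 i) (vert 1 j) := by
    intro i j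
    have h1 := chain1 i.1 i.2
    have h2 := chain1 j.1 j.2
    simp only [Fin.eta] at h1 h2
    exact h1.symm.trans h2
  have chain : ∀ (g : Γ) (i j : Fin m), G.Reachable (vert g i) (vert g j) := by
    intro g i j
    have := (chain1' i j).map (hom g)
    simpa only [homapp, hcmap_vert, mul_one] using this
  -- conjugation by a generator fixes its own vertex
  have hfix : ∀ j : Fin m, vert (γ j) j = vert 1 j := by
    intro j
    refine Subtype.ext ?_
    show Subgroup.map _ _ = Subgroup.map _ _
    rw [conjHom_one, MonoidHom.map_zpowers]
    congr 1
    simp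
  -- main reachability claim
  have key : ∀ g : Γ, ∀ i : Fin m, G.Reachable (vert 1 i₀) (vert g i) := by
    have main : ∀ g ∈ Subgroup.closure (Set.range γ),
        ∀ i : Fin m, G.Reachable (vert 1 i₀) (vert g i) := by
      intro g hg
      refine Subgroup.closure_induction
        (p := fun g _ => ∀ i : Fin m, G.Reachable (vert 1 i₀) (vert g i))
        ?_ ?_ ?_ ?_ hg
      · rintro x ⟨j, rfl⟩ i
        have h1 : G.Reachable (vert 1 i₀) (vert 1 j) := chain1' i₀ j
        have h2 : G.Reachable (vert (γ j) j) (vert (γ j) i) := chain (γ j) j i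
        rw [hfix j] at h2
        exact h1.trans h2
      · intro i
        exact chain1' i₀ i
      · intro x y hx hy ihx ihy i
        have h1 : G.Reachable (vert x i₀) (vert (x * y) i) := by
          have := (ihy i).map (hom x)
          simpa only [homapp, hcmap_vert, mul_one] using this
        exact (ihx i₀).trans h1
      · intro x hx ihx i
        have h1 : G.Reachable (vert x⁻¹ i₀) (vert 1 i₀) := by
          have := (ihx i₀).map (hom x⁻¹)
          simpa only [homapp, hcmap_vert, mul_one, inv_mul_cancel] using this
        exact (h1.symm.trans (chain x⁻¹ i₀ i))
    intro g i
    exact main g (by rw [hgen]; trivial) i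
  refine ⟨?_, hV2, ?_, ?_, ?_⟩
  · -- connectivity
    haveI : Nonempty V := ⟨vert 1 i₀⟩
    refine ⟨?_⟩
    rintro ⟨H, g, i, rfl⟩ ⟨K, g', j, rfl⟩
    exact (key g i).symm.trans (key g' j)
  · rintro H ⟨g, i, rfl⟩
    exact ⟨i, g, rfl⟩
  · rintro H ⟨g, i, rfl⟩
    refine ⟨g * γ i * g⁻¹, ?_, ?_⟩
    · intro hfin
      apply hord i
      have := (MulAut.conj g⁻¹).toMonoidHom.isOfFinOrder hfin
      simpa [mul_assoc] using this
    · rw [MonoidHom.map_zpowers]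
      rfl
  · rintro H K ⟨hne, hc⟩
    have hcent := Subgroup.le_centralizer_iff_isMulCommutative.mpr hc
    intro x hx
    have hxc := hcent (Subgroup.mem_sup_left hx)
    refine Subgroup.mem_inf.mpr ⟨Subgroup.le_normalizer hx, ?_⟩
    rw [Subgroup.mem_normalizer_iff]
    intro k
    constructor
    · intro hk
      have := hxc k (Subgroup.mem_sup_right hk)
      have : x * k * x⁻¹ = k := by
        rw [← this]; group
      rw [this]; exact hk
    · intro hk
      have h2 := hxc _ (Subgroup.mem_sup_right hk)
      have h3 : x * k = x * (x * k * x⁻¹) := by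
        calc x * k = x * k * x⁻¹ * x := by group
        _ = x * (x * k * x⁻¹) := h2
      have hk' : k = x * k * x⁻¹ := mul_left_cancel h3
      rw [hk']; exact hk
end

section
/- Let F be a free subgroup of SL_2(ℤ) containing no nontrivial unipotent element, and form the semidirect product Γ = F ⋉ ℤ² with F acting on ℤ² via the standard action of SL_2(ℤ). If (λ₁, a₁) and (λ₂, a₂) ∈ Γ commute and generate a subgroup isomorphic to ℤ², then λ₁ and λ₂ are trivial; consequently every subgroup of Γ isomorphic to ℤ² is contained in the normal subgroup {1} × ℤ². -/
open Subgroup SemidirectProduct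
open scoped Matrix


/-- The action of a subgroup `F ≤ SL₂(ℤ)` on `ℤ²` (written multiplicatively), via the
standard linear action of `SL₂(ℤ)` on `ℤ²`. -/
noncomputable def sdAct (F : Subgroup (Matrix.SpecialLinearGroup (Fin 2) ℤ)) :
    ↥F →* MulAut (Multiplicative (Fin 2 → ℤ)) where
  toFun A := AddEquiv.toMultiplicative
    ((Matrix.SpecialLinearGroup.toLin' (A : Matrix.SpecialLinearGroup (Fin 2) ℤ)).toAddEquiv)
  map_one' := by ext x; simp
  map_mul' A B := by ext x; simp

lemma unip_aux (A : Matrix.SpecialLinearGroup (Fin 2) ℤ) (w : Fin 2 → ℤ) (hw : w ≠ 0)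
    (h : (A : Matrix (Fin 2) (Fin 2) ℤ) *ᵥ w = w) :
    ((A : Matrix (Fin 2) (Fin 2) ℤ) - 1) ^ 2 = 0 := by
  have h0 : ((A : Matrix (Fin 2) (Fin 2) ℤ) - 1) *ᵥ w = 0 := by
    rw [Matrix.sub_mulVec, h, Matrix.one_mulVec, sub_self]
  have hdet : ((A : Matrix (Fin 2) (Fin 2) ℤ) - 1).det = 0 :=
    Matrix.exists_mulVec_eq_zero_iff.mp ⟨w, hw, h0⟩
  have hdetA : (A : Matrix (Fin 2) (Fin 2) ℤ).det = 1 := A.prop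
  obtain ⟨a, b, c, d, hA⟩ : ∃ a b c d : ℤ, (A : Matrix (Fin 2) (Fin 2) ℤ) = !![a, b; c, d] :=
    ⟨_, _, _, _, Matrix.eta_fin_two _⟩
  rw [hA] at hdet hdetA ⊢
  have hsub : (!![a, b; c, d] - 1 : Matrix (Fin 2) (Fin 2) ℤ) = !![a - 1, b; c, d - 1] := by
    rw [Matrix.one_fin_two]
    ext i j
    fin_cases i <;> fin_cases j <;> simp
  rw [hsub] at hdet ⊢
  rw [Matrix.det_fin_two_of] at hdet
  rw [Matrix.det_fin_two_of] at hdetA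
  have htr : a + d = 2 := by linear_combination hdetA - hdet
  rw [pow_two, Matrix.mul_fin_two]
  ext i j
  fin_cases i <;> fin_cases j <;> simp
  · linear_combination (a - 1) * htr - hdet
  · linear_combination b * htr
  · linear_combination c * htr
  · linear_combination (d - 1) * htr - hdet

open Subgroup

-- in a commutative free group every element is a power of a fixed element
lemma free_comm_cyclic (G : Type*) [Group G] [IsFreeGroup G]
    (hc : ∀ a b : G, a * b = b * a) :
    ∃ g : G, ∀ x : G, ∃ n : ℤ, x = g ^ n := by
  classical
  set S := IsFreeGroup.Generators G
  let e : G ≃* FreeGroup S := IsFreeGroup.toFreeGroup G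
  have hsub : Subsingleton S := by
    constructor
    intro s t
    by_contra hst
    -- map to permutations
    let f : FreeGroup S →* Equiv.Perm (Fin 3) :=
      FreeGroup.lift (fun x => if x = s then Equiv.swap 0 1 else
        if x = t then Equiv.swap 1 2 else 1)
    have hcomm : FreeGroup.of s * FreeGroup.of t = FreeGroup.of t * FreeGroup.of s := by
      have := hc (e.symm (FreeGroup.of s)) (e.symm (FreeGroup.of t))
      have := congrArg e this
      simpa using this
    have := congrArg f hcomm
    simp only [map_mul, f, FreeGroup.lift_apply_of, if_pos rfl, if_neg hst,
      if_neg (Ne.symm hst)] at this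
    simp only [if_true] at this
    exact absurd this (by decide)
  by_cases hS : Nonempty S
  · obtain ⟨s₀⟩ := hS
    refine ⟨e.symm (FreeGroup.of s₀), fun x => ?_⟩
    have key : ∀ w : FreeGroup S, ∃ n : ℤ, w = FreeGroup.of s₀ ^ n := by
      intro w
      induction w using FreeGroup.induction_on with
      | C1 => exact ⟨0, by simp⟩
      | of x => exact ⟨1, by rw [Subsingleton.elim x s₀]; simp⟩
      | inv_of x ih => obtain ⟨n, hn⟩ := ih; exact ⟨-n, by rw [hn, ← zpow_neg]⟩
      | mul x y ihx ihy =>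
          obtain ⟨n, hn⟩ := ihx; obtain ⟨m, hm⟩ := ihy
          exact ⟨n + m, by rw [hn, hm, zpow_add]⟩
    obtain ⟨n, hn⟩ := key (e x)
    exact ⟨n, by have := congrArg e.symm hn; simpa [map_zpow] using this⟩
  · refine ⟨1, fun x => ⟨0, ?_⟩⟩
    have : e x = 1 := by
      induction (e x) using FreeGroup.induction_on with
      | C1 => rfl
      | of x => exact absurd ⟨x⟩ hS
      | inv_of x ih => exact absurd ⟨x⟩ hS
      | mul x y ihx ihy => rw [ihx, ihy, one_mul]
    simpa using congrArg e.symm this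

open Subgroup

lemma closure_pair_comm {G : Type*} [Group G] {a b : G} (h : Commute a b) :
    ∀ u ∈ closure ({a, b} : Set G), ∀ v ∈ closure ({a, b} : Set G), u * v = v * u := by
  have hcent : closure ({a, b} : Set G) ≤ Subgroup.centralizer ({a, b} : Set G) := by
    rw [closure_le]
    intro x hx
    rw [SetLike.mem_coe, Subgroup.mem_centralizer_iff]
    rintro y (rfl | rfl)
    · rcases hx with rfl | rfl
      · rfl
      · exact h.symm.eq.symm
    · rcases hx with rfl | rfl
      · exact h.eq.symm
      · rfl
  intro u hu v hv
  have hv' := hcent hv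
  rw [Subgroup.mem_centralizer_iff] at hv'
  have hsub : ({a, b} : Set G) ⊆ ↑(Subgroup.centralizer {v}) := by
    rintro y hy
    rw [SetLike.mem_coe, Subgroup.mem_centralizer_iff]
    rintro z rfl
    exact (hv' y hy).symm
  have hu' := (closure_le _).mpr hsub hu
  rw [Subgroup.mem_centralizer_iff] at hu'
  exact (hu' v rfl).symm

lemma one_gen_contra (X : ℤ × ℤ) (h : ∀ w : ℤ × ℤ, ∃ n : ℤ, n • X = w) : False := by
  obtain ⟨n1, h1⟩ := h (1, 0)
  obtain ⟨n2, h2⟩ := h (0, 1)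
  rw [Prod.ext_iff] at h1 h2
  simp only [Prod.smul_fst, Prod.smul_snd, smul_eq_mul] at h1 h2
  rcases mul_eq_zero.mp h2.1 with rfl | hX1
  · simpa using h2.2
  · rw [hX1, mul_zero] at h1
    simpa using h1.1

lemma z2_contra (u v : Multiplicative (ℤ × ℤ)) (q p : ℤ) (hqp : ¬(q = 0 ∧ p = 0))
    (hrel : u ^ q = v ^ p) (htop : Subgroup.closure ({u, v} : Set (Multiplicative (ℤ × ℤ))) = ⊤) :
    False := by
  set U := Multiplicative.toAdd u with hU
  set V := Multiplicative.toAdd v with hV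
  have hgen : ∀ w : ℤ × ℤ, ∃ m n : ℤ, m • U + n • V = w := by
    intro w
    have hw : Multiplicative.ofAdd w ∈ Subgroup.closure ({u, v} : Set (Multiplicative (ℤ × ℤ))) := by
      rw [htop]; trivial
    rw [Subgroup.mem_closure_pair] at hw
    obtain ⟨m, n, hmn⟩ := hw
    exact ⟨m, n, by simpa using congrArg Multiplicative.toAdd hmn⟩
  have hUV : q • U = p • V := by simpa using congrArg Multiplicative.toAdd hrel
  rw [Prod.ext_iff] at hUV
  simp only [Prod.smul_fst, Prod.smul_snd, smul_eq_mul] at hUV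
  -- helper: if U = 0 we contradict via V, and symmetrically
  have hUcase : U = 0 → (∃ r : ℤ, r ≠ 0 ∧ r * V.1 = 0 ∧ r * V.2 = 0) → False := by
    intro hU0 ⟨r, hr, h1, h2⟩
    have hV0 : V = 0 := by
      rcases mul_eq_zero.mp h1 with h | h
      · exact absurd h hr
      · rcases mul_eq_zero.mp h2 with h' | h'
        · exact absurd h' hr
        · exact Prod.ext h h'
    apply one_gen_contra 0
    intro w
    obtain ⟨m, n, hmn⟩ := hgen w
    exact ⟨0, by rw [hU0, hV0] at hmn; simpa using hmn⟩
  rcases eq_or_ne q 0 with rfl | hq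
  · have hp : p ≠ 0 := fun h => hqp ⟨rfl, h⟩
    have hV0 : V = 0 := by
      have h1 := hUV.1; have h2 := hUV.2
      simp only [zero_mul] at h1 h2
      rcases mul_eq_zero.mp h1.symm with h | h
      · exact absurd h hp
      · rcases mul_eq_zero.mp h2.symm with h' | h'
        · exact absurd h' hp
        · exact Prod.ext h h'
    apply one_gen_contra U
    intro w
    obtain ⟨m, n, hmn⟩ := hgen w
    exact ⟨m, by rw [hV0] at hmn; simpa using hmn⟩
  · rcases eq_or_ne p 0 with rfl | hp
    · -- q • U = 0
      have hU0 : U = 0 := by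
        have h1 := hUV.1; have h2 := hUV.2
        simp only [zero_mul] at h1 h2
        rcases mul_eq_zero.mp h1 with h | h
        · exact absurd h hq
        · rcases mul_eq_zero.mp h2 with h' | h'
          · exact absurd h' hq
          · exact Prod.ext h h'
      apply one_gen_contra V
      intro w
      obtain ⟨m, n, hmn⟩ := hgen w
      exact ⟨n, by rw [hU0] at hmn; simpa using hmn⟩
    · -- both nonzero: functional argument
      have hfV : U.1 * V.2 - U.2 * V.1 = 0 := by
        have : p * (U.1 * V.2 - U.2 * V.1) = 0 := by
          linear_combination U.2 * hUV.1 - U.1 * hUV.2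
        rcases mul_eq_zero.mp this with h | h
        · exact absurd h hp
        · exact h
      have hf : ∀ w : ℤ × ℤ, U.1 * w.2 - U.2 * w.1 = 0 := by
        intro w
        obtain ⟨m, n, hmn⟩ := hgen w
        rw [Prod.ext_iff] at hmn
        simp only [Prod.fst_add, Prod.snd_add, Prod.smul_fst, Prod.smul_snd,
          smul_eq_mul] at hmn
        linear_combination U.1 * hmn.2.symm - U.2 * hmn.1.symm + n * hfV
      have hU1 : U.1 = 0 := by simpa using hf (0, 1)
      have hU2 : U.2 = 0 := by have := hf (1, 0); simpa using this
      exact hUcase (Prod.ext hU1 hU2)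
        ⟨p, hp, by linear_combination -hUV.1 + q * hU1, by linear_combination -hUV.2 + q * hU2⟩

lemma sdAct_apply (F : Subgroup (Matrix.SpecialLinearGroup (Fin 2) ℤ)) (A : ↥F)
    (a : Multiplicative (Fin 2 → ℤ)) :
    (sdAct F A) a = Multiplicative.ofAdd
      (((A : Matrix.SpecialLinearGroup (Fin 2) ℤ) : Matrix (Fin 2) (Fin 2) ℤ) *ᵥ
        Multiplicative.toAdd a) := by
  have h : (sdAct F A) a = Multiplicative.ofAdd
      ((Matrix.SpecialLinearGroup.toLin' (A : Matrix.SpecialLinearGroup (Fin 2) ℤ))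
        (Multiplicative.toAdd a)) := rfl
  rw [h, Matrix.SpecialLinearGroup.toLin'_apply, Matrix.toLin'_apply]

lemma fix_vec (F : Subgroup (Matrix.SpecialLinearGroup (Fin 2) ℤ))
    (x z : Multiplicative (Fin 2 → ℤ) ⋊[sdAct F] ↥F)
    (hc : x * z = z * x) (hz : z.right = 1) :
    ((x.right : Matrix.SpecialLinearGroup (Fin 2) ℤ) : Matrix (Fin 2) (Fin 2) ℤ) *ᵥ
      Multiplicative.toAdd z.left = Multiplicative.toAdd z.left := by
  have h1 := congrArg SemidirectProduct.left hc
  simp only [mul_left, hz, _root_.map_one, MulAut.one_apply] at h1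
  have h2 : (sdAct F x.right) z.left = z.left := by
    have := h1.trans (mul_comm z.left x.left)
    exact mul_left_cancel this
  rw [sdAct_apply] at h2
  have := congrArg Multiplicative.toAdd h2
  simpa using this

lemma key (F : Subgroup (Matrix.SpecialLinearGroup (Fin 2) ℤ)) [IsFreeGroup ↥F]
    (hunip : ∀ A : Matrix.SpecialLinearGroup (Fin 2) ℤ, A ∈ F →
      ((A : Matrix (Fin 2) (Fin 2) ℤ) - 1) ^ 2 = 0 → A = 1)
    (x y : Multiplicative (Fin 2 → ℤ) ⋊[sdAct F] ↥F) (h : Commute x y)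
    (hiso : Nonempty (↥(Subgroup.closure {x, y}) ≃* Multiplicative (ℤ × ℤ))) :
    x.right = 1 ∧ y.right = 1 := by
  obtain ⟨e⟩ := hiso
  set A := x.right with hAdef
  set B := y.right with hBdef
  have hAB : Commute A B := h.map (rightHom : _ →* ↥F)
  set K := Subgroup.closure ({A, B} : Set ↥F) with hKdef
  have hKcomm : ∀ a b : ↥K, a * b = b * a := fun a b =>
    Subtype.ext (closure_pair_comm hAB a a.2 b b.2)
  obtain ⟨g, hg⟩ := free_comm_cyclic ↥K hKcomm
  obtain ⟨p0, hp0⟩ := hg ⟨A, Subgroup.subset_closure (by simp)⟩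
  obtain ⟨q0, hq0⟩ := hg ⟨B, Subgroup.subset_closure (by simp)⟩
  have hA : A = (g : ↥F) ^ p0 := by
    have := congrArg (Subtype.val) hp0
    simpa using this
  have hB : B = (g : ↥F) ^ q0 := by
    have := congrArg (Subtype.val) hq0
    simpa using this
  by_cases h0 : q0 = 0 ∧ p0 = 0
  · rw [hA, hB, h0.1, h0.2]; simp
  · set z := x ^ q0 * y ^ (-p0) with hzdef
    have hxmem : x ∈ Subgroup.closure ({x, y} : Set _) := subset_closure (by simp)
    have hymem : y ∈ Subgroup.closure ({x, y} : Set _) := subset_closure (by simp)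
    have hzr : z.right = 1 := by
      have h1 : rightHom z = A ^ q0 * B ^ (-p0) := by
        rw [hzdef, _root_.map_mul, map_zpow, map_zpow]; rfl
      have h2 : rightHom z = 1 := by
        rw [h1, hA, hB, ← zpow_mul, ← zpow_mul, ← zpow_add]
        have he : p0 * q0 + q0 * -p0 = 0 := by ring
        rw [he, zpow_zero]
      exact h2
    by_cases hz1 : z = 1
    · exfalso
      have hxy_rel : x ^ q0 = y ^ p0 := by
        have h2 : x ^ q0 * y ^ (-p0) = 1 := hz1
        rw [zpow_neg] at h2
        rw [← mul_inv_cancel (y ^ p0)] at h2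
        exact mul_right_cancel h2
      set x' : ↥(Subgroup.closure ({x, y} : Set _)) := ⟨x, hxmem⟩ with hx'
      set y' : ↥(Subgroup.closure ({x, y} : Set _)) := ⟨y, hymem⟩ with hy'
      have hrel' : x' ^ q0 = y' ^ p0 := by
        apply Subtype.ext
        push_cast [SubgroupClass.coe_zpow]
        exact hxy_rel
      have htop' : Subgroup.closure ({x', y'} : Set ↥(Subgroup.closure {x, y})) = ⊤ := by
        have hpre : (((↑) : ↥(Subgroup.closure {x, y}) → _) ⁻¹' {x, y})
            = ({x', y'} : Set ↥(Subgroup.closure {x, y})) := by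
          ext t
          simp only [Set.mem_preimage, Set.mem_insert_iff, Set.mem_singleton_iff]
          constructor
          · rintro (ht | ht)
            · exact Or.inl (Subtype.ext ht)
            · exact Or.inr (Subtype.ext ht)
          · rintro (rfl | rfl)
            · exact Or.inl rfl
            · exact Or.inr rfl
        rw [← hpre]
        exact Subgroup.closure_closure_coe_preimage
      refine z2_contra (e x') (e y') q0 p0 h0 ?_ ?_
      · rw [← map_zpow, ← map_zpow, hrel']
      · have himg : Subgroup.map e.toMonoidHom (Subgroup.closure
            ({x', y'} : Set ↥(Subgroup.closure {x, y}))) =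
            Subgroup.closure ({e x', e y'} : Set (Multiplicative (ℤ × ℤ))) := by
          rw [MonoidHom.map_closure, Set.image_pair]
          rfl
        rw [← himg, htop', Subgroup.map_top_of_surjective _ e.surjective]
    · have hzl : Multiplicative.toAdd z.left ≠ 0 := by
        intro h'
        apply hz1
        have hl : z.left = 1 := by
          have := congrArg Multiplicative.ofAdd h'
          simpa using this
        exact SemidirectProduct.ext hl hzr
      have hcx : x * z = z * x :=
        ((Commute.refl x).zpow_right q0).mul_right (h.zpow_right (-p0))
      have hcy : y * z = z * y :=
        (h.symm.zpow_right q0).mul_right ((Commute.refl y).zpow_right (-p0))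
      constructor
      · have hfix := fix_vec F x z hcx hzr
        have hu := unip_aux (A : Matrix.SpecialLinearGroup (Fin 2) ℤ) _ hzl hfix
        exact Subtype.ext (hunip _ A.2 hu)
      · have hfix := fix_vec F y z hcy hzr
        have hu := unip_aux (B : Matrix.SpecialLinearGroup (Fin 2) ℤ) _ hzl hfix
        exact Subtype.ext (hunip _ B.2 hu)

/-- Let `F ≤ SL₂(ℤ)` be a free subgroup containing no nontrivial unipotent element, and
let `Γ = F ⋉ ℤ²` be the semidirect product for the standard action.  If two elements of `Γ`
commute and generate a subgroup isomorphic to `ℤ²`, then their `F`-components are trivial;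
consequently every subgroup of `Γ` isomorphic to `ℤ²` lies in the normal subgroup
`{1} × ℤ²`. -/
theorem statement15 (F : Subgroup (Matrix.SpecialLinearGroup (Fin 2) ℤ))
    [IsFreeGroup ↥F]
    (hunip : ∀ A : Matrix.SpecialLinearGroup (Fin 2) ℤ, A ∈ F →
      ((A : Matrix (Fin 2) (Fin 2) ℤ) - 1) ^ 2 = 0 → A = 1) :
    (∀ x y : Multiplicative (Fin 2 → ℤ) ⋊[sdAct F] ↥F,
      Commute x y →
      Nonempty (↥(Subgroup.closure {x, y}) ≃* Multiplicative (ℤ × ℤ)) →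
      x.right = 1 ∧ y.right = 1) ∧
    (∀ H : Subgroup (Multiplicative (Fin 2 → ℤ) ⋊[sdAct F] ↥F),
      Nonempty (↥H ≃* Multiplicative (ℤ × ℤ)) →
      H ≤ (SemidirectProduct.inl :
        Multiplicative (Fin 2 → ℤ) →* Multiplicative (Fin 2 → ℤ) ⋊[sdAct F] ↥F).range) := by
  refine ⟨fun x y hxy hiso => key F hunip x y hxy hiso, ?_⟩
  rintro H ⟨e⟩
  set m₁ : Multiplicative (ℤ × ℤ) := Multiplicative.ofAdd ((1, 0) : ℤ × ℤ) with hm₁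
  set m₂ : Multiplicative (ℤ × ℤ) := Multiplicative.ofAdd ((0, 1) : ℤ × ℤ) with hm₂
  have htop : Subgroup.closure ({m₁, m₂} : Set (Multiplicative (ℤ × ℤ))) = ⊤ := by
    rw [eq_top_iff']
    intro w
    rw [Subgroup.mem_closure_pair]
    refine ⟨(Multiplicative.toAdd w).1, (Multiplicative.toAdd w).2, ?_⟩
    apply Multiplicative.toAdd.injective
    simp [hm₁, hm₂, Prod.ext_iff]
  set u := e.symm m₁ with hu
  set v := e.symm m₂ with hv
  have htopH : Subgroup.closure ({u, v} : Set ↥H) = ⊤ := by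
    have h1 : Subgroup.map e.symm.toMonoidHom (Subgroup.closure {m₁, m₂}) =
        Subgroup.closure ({u, v} : Set ↥H) := by
      rw [MonoidHom.map_closure, Set.image_pair]
      rfl
    rw [htop, Subgroup.map_top_of_surjective _ e.symm.surjective] at h1
    exact h1.symm
  have hH : Subgroup.closure {(u : Multiplicative (Fin 2 → ℤ) ⋊[sdAct F] ↥F),
      (v : Multiplicative (Fin 2 → ℤ) ⋊[sdAct F] ↥F)} = H := by
    have h2 : Subgroup.map H.subtype (Subgroup.closure {u, v}) =
        Subgroup.closure {(u : Multiplicative (Fin 2 → ℤ) ⋊[sdAct F] ↥F),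
          (v : Multiplicative (Fin 2 → ℤ) ⋊[sdAct F] ↥F)} := by
      rw [MonoidHom.map_closure, Set.image_pair]
      rfl
    rw [htopH] at h2
    rw [← h2, ← MonoidHom.range_eq_map, Subgroup.range_subtype]
  have hcomm : Commute (u : Multiplicative (Fin 2 → ℤ) ⋊[sdAct F] ↥F)
      (v : Multiplicative (Fin 2 → ℤ) ⋊[sdAct F] ↥F) :=
    ((show Commute m₁ m₂ from mul_comm m₁ m₂).map e.symm.toMonoidHom).map H.subtype
  have hiso : Nonempty (↥(Subgroup.closure {(u : Multiplicative (Fin 2 → ℤ) ⋊[sdAct F] ↥F),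
      (v : Multiplicative (Fin 2 → ℤ) ⋊[sdAct F] ↥F)}) ≃* Multiplicative (ℤ × ℤ)) :=
    ⟨(MulEquiv.subgroupCongr hH).trans e⟩
  obtain ⟨hu1, hv1⟩ := key F hunip _ _ hcomm hiso
  rw [SemidirectProduct.range_inl_eq_ker_rightHom, ← hH, Subgroup.closure_le]
  rintro w (rfl | rfl)
  · exact hu1
  · exact hv1
end
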